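/- Let N ≥ 1 be a natural number, let a_{-N}, …, a_{-1}, a₀ be complex numbers, and let f : (0,∞) → ℂ be continuous. Suppose there are constants C > 0 and δ > 0 such that |f(t) − ∑_{k=1}^{N} a_{-k} t^{-k} − a₀| ≤ C·t for all 0 < t ≤ 1, and |f(t)| ≤ C·e^{-δ t} for all t ≥ 1. Then for every complex s with Re s > N the integral ∫₀^∞ f(t) t^{s-1} dt converges absolutely, and there exists a function g, analytic on {s ∈ ℂ : Re s > −1} \ {1, 2, …, N}, such that g(s) = Γ(s)⁻¹ · ∫₀^∞ f(t) t^{s-1} dt for all s with Re s > N, and g(0) = a₀. -/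

import Mathlib

open MeasureTheory Set Filter Topology

theorem hasMellin_finset_sum {ι : Type*} (u : Finset ι) (F : ι → ℝ → ℂ) (s : ℂ) (m : ι → ℂ)
    (hFm : ∀ i ∈ u, HasMellin (F i) s (m i)) :
    HasMellin (fun t => ∑ i ∈ u, F i t) s (∑ i ∈ u, m i) := by
  classical
  induction u using Finset.induction_on with
  | empty =>
      refine ⟨?_, ?_⟩
      · simp only [MellinConvergent, Finset.sum_empty, smul_zero]
        exact integrable_zero _ _ _
      · simp [mellin]
  | insert i u' hni ih =>
      have h1 := hFm i (Finset.mem_insert_self i u')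
      have h2 := ih fun j hj => hFm j (Finset.mem_insert_of_mem hj)
      have H := hasMellin_add h1.1 h2.1
      simp only [Finset.sum_insert hni]
      exact ⟨H.1, by rw [H.2, h1.2, h2.2]⟩

/-- If a continuous function `f` on `(0,∞)` has a short-time expansion
`f(t) = ∑_{k=1}^N a_{-k} t^{-k} + a₀ + O(t)` and decays exponentially at infinity, then its
Mellin-type zeta integral `Γ(s)⁻¹ ∫₀^∞ f(t) t^{s-1} dt` converges absolutely for `Re s > N`
and extends to a function `g` analytic on `{Re s > −1} \ {1, …, N}` with `g(0) = a₀`. -/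
theorem zeta_integral_analytic_continuation
    (N : ℕ) (hN : 1 ≤ N) (a : ℕ → ℂ) (f : ℝ → ℂ)
    (hf : ContinuousOn f (Ioi 0)) (C δ : ℝ) (hC : 0 < C) (hδ : 0 < δ)
    (h0 : ∀ t : ℝ, 0 < t → t ≤ 1 →
      ‖f t - (∑ k ∈ Finset.Icc 1 N, a k * (t : ℂ) ^ (-(k : ℤ))) - a 0‖ ≤ C * t)
    (hinf : ∀ t : ℝ, 1 ≤ t → ‖f t‖ ≤ C * Real.exp (-δ * t)) :
    (∀ s : ℂ, (N : ℝ) < s.re →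
        IntegrableOn (fun t : ℝ => f t * (t : ℂ) ^ (s - 1)) (Ioi 0)) ∧
      ∃ g : ℂ → ℂ,
        AnalyticOnNhd ℂ g
          ({s : ℂ | -1 < s.re} \ {s : ℂ | ∃ k : ℕ, 1 ≤ k ∧ k ≤ N ∧ s = (k : ℂ)}) ∧
        (∀ s : ℂ, (N : ℝ) < s.re →
          g s = (Complex.Gamma s)⁻¹ * ∫ t in Ioi (0 : ℝ), f t * (t : ℂ) ^ (s - 1)) ∧
        g 0 = a 0 := by
  classical
  have hN1 : (1 : ℝ) ≤ (N : ℝ) := by exact_mod_cast hN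
  set P : ℝ → ℂ := fun t => (∑ k ∈ Finset.Icc 1 N, a k * (t : ℂ) ^ (-(k : ℤ))) + a 0 with hP
  set Q : ℝ → ℂ := indicator (Ioc 0 1) P with hQdef
  set h : ℝ → ℂ := fun t => f t - Q t with hhdef
  -- continuity of P on Ioi 0
  have hPc : ContinuousOn P (Ioi 0) := by
    apply ContinuousOn.add _ continuousOn_const
    apply continuousOn_finset_sum
    intro k _
    refine continuousOn_const.mul ?_
    refine (Complex.continuous_ofReal.continuousOn).zpow₀ _ fun t ht => Or.inl ?_
    simp only [ne_eq, Complex.ofReal_eq_zero]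
    exact ne_of_gt ht
  -- local integrability
  have hfloc : LocallyIntegrableOn f (Ioi 0) := hf.locallyIntegrableOn measurableSet_Ioi
  have hQloc : LocallyIntegrableOn Q (Ioi 0) := by
    rw [locallyIntegrableOn_iff isOpen_Ioi.isLocallyClosed]
    intro K hK hKc
    have h0K : (0 : ℝ) ∉ K := fun hz => lt_irrefl (0 : ℝ) (hK hz)
    have hset : Ioc (0 : ℝ) 1 ∩ K = Icc (0 : ℝ) 1 ∩ K := by
      ext x
      constructor
      · rintro ⟨hx, hxK⟩; exact ⟨⟨hx.1.le, hx.2⟩, hxK⟩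
      · rintro ⟨hx, hxK⟩
        refine ⟨⟨lt_of_le_of_ne hx.1 fun e => h0K (e ▸ hxK), hx.2⟩, hxK⟩
    have hcomp : IsCompact (Ioc (0 : ℝ) 1 ∩ K) := by
      rw [hset]; exact hKc.inter_left isClosed_Icc
    have hsub : Ioc (0 : ℝ) 1 ∩ K ⊆ Ioi 0 := fun x hx => hx.1.1
    have hint : IntegrableOn P (Ioc 0 1 ∩ K) := (hPc.mono hsub).integrableOn_compact hcomp
    rw [hQdef, IntegrableOn, integrable_indicator_iff measurableSet_Ioc, IntegrableOn,
      Measure.restrict_restrict measurableSet_Ioc]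
    exact hint
  have hloc : LocallyIntegrableOn h (Ioi 0) := hfloc.sub hQloc
  -- decay at infinity
  have htop : h =O[atTop] fun t => Real.exp (-δ * t) := by
    rw [Asymptotics.isBigO_iff]
    refine ⟨C, ?_⟩
    filter_upwards [eventually_gt_atTop (1 : ℝ)] with t ht
    have hQ0 : Q t = 0 :=
      indicator_of_notMem (fun hmem => absurd hmem.2 (not_le.mpr ht)) _
    have : h t = f t := by simp [hhdef, hQ0]
    rw [this, Real.norm_eq_abs, abs_of_pos (Real.exp_pos _)]
    exact hinf t ht.le
  -- behaviour at 0
  have hbot : h =O[𝓝[>] (0 : ℝ)] fun t => t ^ (-(-1 : ℝ)) := by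
    rw [Asymptotics.isBigO_iff]
    refine ⟨C, ?_⟩
    filter_upwards [Ioc_mem_nhdsGT (zero_lt_one' ℝ)] with t ht
    have hQt : Q t = P t := indicator_of_mem ht _
    have hht : h t = f t - (∑ k ∈ Finset.Icc 1 N, a k * (t : ℂ) ^ (-(k : ℤ))) - a 0 := by
      rw [hhdef]; simp only [hQt, hP]; ring
    rw [hht, neg_neg, Real.rpow_one, Real.norm_eq_abs, abs_of_pos ht.1]
    exact h0 t ht.1 ht.2
  have hconv_h : ∀ s : ℂ, (-1 : ℝ) < s.re → MellinConvergent h s := fun s hs =>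
    mellinConvergent_of_isBigO_rpow_exp hδ hloc htop hbot hs
  have hdiff_h : ∀ s : ℂ, (-1 : ℝ) < s.re → DifferentiableAt ℂ (mellin h) s := fun s hs =>
    mellin_differentiableAt_of_isBigO_rpow_exp hδ hloc htop hbot hs
  -- Mellin transform of Q
  have hQmell : ∀ s : ℂ, (N : ℝ) < s.re →
      HasMellin Q s ((∑ k ∈ Finset.Icc 1 N, a k * (s - (k : ℕ))⁻¹) + a 0 * s⁻¹) := by
    intro s hs
    have hs0 : 0 < s.re := by linarith
    have hrep : Q = fun t =>
        (∑ k ∈ Finset.Icc 1 N,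
          (fun u => a k • indicator (Ioc (0:ℝ) 1) (fun v : ℝ => (v : ℂ) ^ (-(k : ℂ))) u) t) +
          a 0 • indicator (Ioc (0:ℝ) 1) (fun _ => (1 : ℂ)) t := by
      funext t
      by_cases htm : t ∈ Ioc (0 : ℝ) 1
      · simp only [hQdef, indicator_of_mem htm, hP, smul_eq_mul, mul_one]
        congr 1
        refine Finset.sum_congr rfl fun k _ => ?_
        congr 1
        rw [show (-(k : ℂ)) = ((-(k : ℤ) : ℤ) : ℂ) by push_cast; ring, Complex.cpow_intCast]
      · simp [hQdef, indicator_of_notMem htm]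
    have hsum : HasMellin (fun t => ∑ k ∈ Finset.Icc 1 N,
        (fun u => a k • indicator (Ioc (0:ℝ) 1) (fun v : ℝ => (v : ℂ) ^ (-(k : ℂ))) u) t) s
        (∑ k ∈ Finset.Icc 1 N, a k * (s - (k : ℕ))⁻¹) := by
      apply hasMellin_finset_sum
      intro k hk
      have hk' : (k : ℝ) ≤ (N : ℝ) := by exact_mod_cast (Finset.mem_Icc.mp hk).2
      have hre : 0 < s.re + (-(k : ℂ)).re := by
        simp only [Complex.neg_re, Complex.natCast_re]
        linarith
      have base := hasMellin_cpow_Ioc (-(k : ℂ)) hre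
      refine ⟨base.1.const_smul _, ?_⟩
      rw [mellin_const_smul, base.2, smul_eq_mul, one_div, ← sub_eq_add_neg]
    have h0piece : HasMellin (fun t => a 0 • indicator (Ioc (0:ℝ) 1) (fun _ => (1 : ℂ)) t) s
        (a 0 * s⁻¹) := by
      have base := hasMellin_one_Ioc hs0
      refine ⟨base.1.const_smul _, ?_⟩
      rw [mellin_const_smul, base.2, smul_eq_mul, one_div]
    have H := hasMellin_add hsum.1 h0piece.1
    rw [hrep]
    exact ⟨H.1, by rw [H.2, hsum.2, h0piece.2]⟩
  -- Mellin transform of f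
  have hmell_f : ∀ s : ℂ, (N : ℝ) < s.re →
      HasMellin f s (mellin h s + ((∑ k ∈ Finset.Icc 1 N, a k * (s - (k : ℕ))⁻¹) + a 0 * s⁻¹)) := by
    intro s hs
    have h1 := hconv_h s (by linarith)
    have h2 := hQmell s hs
    have H := hasMellin_add h1 h2.1
    have heq : (fun t => h t + Q t) = f := by
      funext t; simp [hhdef]
    rw [heq] at H
    exact ⟨H.1, by rw [H.2, h2.2]⟩
  have hint_eq : ∀ s : ℂ, (∫ t in Ioi (0 : ℝ), f t * (t : ℂ) ^ (s - 1)) = mellin f s := by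
    intro s
    rw [mellin]
    exact setIntegral_congr_fun measurableSet_Ioi fun t _ => by
      rw [smul_eq_mul, mul_comm]
  constructor
  · intro s hs
    refine ((hmell_f s hs).1.congr_fun (fun t _ => ?_) measurableSet_Ioi)
    dsimp only; rw [smul_eq_mul, mul_comm]
  · refine ⟨fun s => a 0 * (Complex.Gamma (s + 1))⁻¹ +
      (Complex.Gamma s)⁻¹ * (mellin h s + ∑ k ∈ Finset.Icc 1 N, a k * (s - (k : ℕ))⁻¹),
      ?_, ?_, ?_⟩
    · -- analyticity
      have hSfin : Set.Finite {s : ℂ | ∃ k : ℕ, 1 ≤ k ∧ k ≤ N ∧ s = (k : ℂ)} := by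
        refine Set.Finite.subset ((Set.finite_Icc (1 : ℕ) N).image (fun k : ℕ => (k : ℂ))) ?_
        rintro s ⟨k, h1, h2, rfl⟩
        exact ⟨k, mem_Icc.mpr ⟨h1, h2⟩, rfl⟩
      have hopen : IsOpen ({s : ℂ | -1 < s.re} \
          {s : ℂ | ∃ k : ℕ, 1 ≤ k ∧ k ≤ N ∧ s = (k : ℂ)}) :=
        (isOpen_lt continuous_const Complex.continuous_re).sdiff hSfin.isClosed
      refine DifferentiableOn.analyticOnNhd ?_ hopen
      rintro s ⟨hs1, hs2⟩
      have hs1' : (-1 : ℝ) < s.re := hs1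
      refine DifferentiableAt.differentiableWithinAt ?_
      refine DifferentiableAt.add ?_ ?_
      · exact ((Complex.differentiable_one_div_Gamma.comp
          (differentiable_id.add_const 1)).const_mul (a 0)).differentiableAt
      · refine DifferentiableAt.mul (Complex.differentiable_one_div_Gamma.differentiableAt) ?_
        refine (hdiff_h s hs1').add ?_
        refine DifferentiableAt.fun_sum fun k hk => ?_
        refine ((differentiableAt_id.sub_const _).inv ?_).const_mul _
        refine sub_ne_zero.mpr fun e => hs2 ?_
        exact ⟨k, (Finset.mem_Icc.mp hk).1, (Finset.mem_Icc.mp hk).2, e⟩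
    · -- value for re s > N
      intro s hs
      have hs0 : s ≠ 0 := by
        intro e
        rw [e, Complex.zero_re] at hs
        linarith
      beta_reduce
      rw [hint_eq s, (hmell_f s hs).2, Complex.Gamma_add_one s hs0, mul_inv]
      ring
    · -- value at 0
      simp [Complex.Gamma_zero, Complex.Gamma_one]
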